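/- Every path p' in ℂQ' can be written as p' = q·ξ(p) for some path p ∈ ℂQ and some path q ∈ ℂQ' composed solely of isomorphism arrows and their inverses. In particular, if deg(p') ≡ 0 mod n (for the grading giving isomorphism arrows degree 1, their inverses degree −1, and all other arrows degree 0), then p' lies in the image of ξ. -/

import Mathlib

noncomputable section
open scoped Classical

structure Quiv : Type 1 where
  V : Type
  A : Type
  [finV : Fintype V]
  [finA : Fintype A]
  s : A → V
  t : A → V

attribute [instance] Quiv.finV Quiv.finA

namespace Quiv

variable (k : Type) [CommRing k] (Q : Quiv)

inductive PathRel : FreeAlgebra k (Q.V ⊕ Q.A) → FreeAlgebra k (Q.V ⊕ Q.A) → Prop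
  | vertex_mul (i j : Q.V) : PathRel
      (FreeAlgebra.ι k (Sum.inl i) * FreeAlgebra.ι k (Sum.inl j))
      (if i = j then FreeAlgebra.ι k (Sum.inl i) else 0)
  | vertex_sum : PathRel (∑ i : Q.V, FreeAlgebra.ι k (Sum.inl i)) 1
  | target_mul (a : Q.A) : PathRel
      (FreeAlgebra.ι k (Sum.inl (Q.t a)) * FreeAlgebra.ι k (Sum.inr a))
      (FreeAlgebra.ι k (Sum.inr a))
  | source_mul (a : Q.A) : PathRel
      (FreeAlgebra.ι k (Sum.inr a) * FreeAlgebra.ι k (Sum.inl (Q.s a)))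
      (FreeAlgebra.ι k (Sum.inr a))

def PathAlg : Type := RingQuot (PathRel k Q)

instance : Ring (PathAlg k Q) := inferInstanceAs (Ring (RingQuot _))
instance : Algebra k (PathAlg k Q) := inferInstanceAs (Algebra k (RingQuot _))

def vtx (i : Q.V) : PathAlg k Q :=
  RingQuot.mkAlgHom k (PathRel k Q) (FreeAlgebra.ι k (Sum.inl i))

def arr (a : Q.A) : PathAlg k Q :=
  RingQuot.mkAlgHom k (PathRel k Q) (FreeAlgebra.ι k (Sum.inr a))

def pathOf (l : List Q.A) : PathAlg k Q := (l.map (arr k Q)).prod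

def Composable (l : List Q.A) : Prop := List.Chain' (fun a b => Q.s a = Q.t b) l

def IsCycle (l : List Q.A) : Prop :=
  l ≠ [] ∧ List.Chain' (fun a b => Q.s a = Q.t b) (l ++ l.take 1)

def IsPathFrom (l : List Q.A) (i j : Q.V) : Prop :=
  Composable Q l ∧ (l = [] → i = j) ∧
    (∀ h : l ≠ [], Q.t (l.head h) = j) ∧ (∀ h : l ≠ [], Q.s (l.getLast h) = i)

def cycDeriv (l : List Q.A) (a : Q.A) : PathAlg k Q :=
  ∑ i ∈ Finset.range l.length,
    if (l.rotate i).head? = some a then pathOf k Q (l.rotate i).tail else 0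

abbrev Potential := List (k × List Q.A)

def Potential.deriv (W : Potential k Q) (a : Q.A) : PathAlg k Q :=
  (W.map fun p => p.1 • cycDeriv k Q p.2 a).sum

def Potential.elem (W : Potential k Q) : PathAlg k Q :=
  (W.map fun p => p.1 • pathOf k Q p.2).sum

inductive JacRel (W : Potential k Q) : PathAlg k Q → PathAlg k Q → Prop
  | deriv (a : Q.A) : JacRel W (Potential.deriv k Q W a) 0

def Jac (W : Potential k Q) : Type := RingQuot (JacRel k Q W)

instance (W : Potential k Q) : Ring (Jac k Q W) := inferInstanceAs (Ring (RingQuot _))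
instance (W : Potential k Q) : Algebra k (Jac k Q W) := inferInstanceAs (Algebra k (RingQuot _))

def jacMk (W : Potential k Q) : PathAlg k Q →ₐ[k] Jac k Q W :=
  RingQuot.mkAlgHom k (JacRel k Q W)

def Potential.memIdeal (W : Potential k Q) (x : PathAlg k Q) : Prop :=
  jacMk k Q W x = 0

def loc (S : Set Q.A) : Quiv where
  V := Q.V
  A := Q.A ⊕ ↥S
  s := Sum.elim Q.s fun a => Q.t a.1
  t := Sum.elim Q.t fun a => Q.s a.1

inductive LocRel (S : Set Q.A) : PathAlg k (Q.loc S) → PathAlg k (Q.loc S) → Prop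
  | inv_mul (a : ↥S) : LocRel S
      (arr k (Q.loc S) (Sum.inr a) * arr k (Q.loc S) (Sum.inl a.1))
      (vtx k (Q.loc S) (Q.s a.1))
  | mul_inv (a : ↥S) : LocRel S
      (arr k (Q.loc S) (Sum.inl a.1) * arr k (Q.loc S) (Sum.inr a))
      (vtx k (Q.loc S) (Q.t a.1))

def LocAlg (S : Set Q.A) : Type := RingQuot (LocRel k Q S)

instance (S : Set Q.A) : Ring (LocAlg k Q S) := inferInstanceAs (Ring (RingQuot _))
instance (S : Set Q.A) : Algebra k (LocAlg k Q S) := inferInstanceAs (Algebra k (RingQuot _))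

def locMk (S : Set Q.A) : PathAlg k (Q.loc S) →ₐ[k] LocAlg k Q S :=
  RingQuot.mkAlgHom k (LocRel k Q S)

def locVtx (S : Set Q.A) (i : Q.V) : LocAlg k Q S := locMk k Q S (vtx k (Q.loc S) i)

def locArr (S : Set Q.A) (x : (Q.loc S).A) : LocAlg k Q S := locMk k Q S (arr k (Q.loc S) x)

def locProd (S : Set Q.A) (l : List (Q.loc S).A) : LocAlg k Q S :=
  locMk k Q S (pathOf k (Q.loc S) l)

inductive JacLRel (S : Set Q.A) (W : Potential k (Q.loc S)) :
    LocAlg k Q S → LocAlg k Q S → Prop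
  | deriv (x : (Q.loc S).A) : JacLRel S W (locMk k Q S (Potential.deriv k (Q.loc S) W x)) 0

def JacL (S : Set Q.A) (W : Potential k (Q.loc S)) : Type := RingQuot (JacLRel k Q S W)

instance (S : Set Q.A) (W : Potential k (Q.loc S)) : Ring (JacL k Q S W) :=
  inferInstanceAs (Ring (RingQuot _))
instance (S : Set Q.A) (W : Potential k (Q.loc S)) : Algebra k (JacL k Q S W) :=
  inferInstanceAs (Algebra k (RingQuot _))

def jacLMk (S : Set Q.A) (W : Potential k (Q.loc S)) : LocAlg k Q S →ₐ[k] JacL k Q S W :=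
  RingQuot.mkAlgHom k (JacLRel k Q S W)

def memIdealL (S : Set Q.A) (W : Potential k (Q.loc S)) (x : LocAlg k Q S) : Prop :=
  jacLMk k Q S W x = 0

def locWeight (S : Set Q.A) (w : Q.A → ℤ) : (Q.loc S).A → ℤ :=
  Sum.elim w fun a => - w a.1

def degPart (S : Set Q.A) (w : Q.A → ℤ) (d : ℤ) : Submodule k (LocAlg k Q S) :=
  Submodule.span k {x | (d = 0 ∧ ∃ i : Q.V, x = locVtx k Q S i) ∨
    ∃ l : List (Q.loc S).A, (l.map (locWeight Q S w)).sum = d ∧ x = locProd k Q S l}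

structure Tiling where
  TV : Type
  [finTV : Fintype TV]
  isWhite : TV → Bool
  whiteOf : Q.A → TV
  blackOf : Q.A → TV
  whiteOf_white : ∀ a, isWhite (whiteOf a) = true
  blackOf_black : ∀ a, isWhite (blackOf a) = false
  cyc : TV → List Q.A
  cyc_isCycle : ∀ v, IsCycle Q (cyc v)
  cyc_nodup : ∀ v, (cyc v).Nodup
  mem_cyc : ∀ v a, a ∈ cyc v ↔ whiteOf a = v ∨ blackOf a = v

attribute [instance] Tiling.finTV

def Tiling.potential (T : Tiling Q) : Potential k Q :=
  (Finset.univ (α := T.TV)).toList.map fun v =>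
    ((if T.isWhite v then (1 : k) else -1), T.cyc v)

structure Aut where
  onV : Q.V ≃ Q.V
  onA : Q.A ≃ Q.A
  s_comm : ∀ a, Q.s (onA a) = onV (Q.s a)
  t_comm : ∀ a, Q.t (onA a) = onV (Q.t a)

structure TAut (T : Tiling Q) extends Aut Q where
  onTV : T.TV ≃ T.TV
  white_comm : ∀ v, T.isWhite (onTV v) = T.isWhite v
  whiteOf_comm : ∀ a, T.whiteOf (onA a) = onTV (T.whiteOf a)
  blackOf_comm : ∀ a, T.blackOf (onA a) = onTV (T.blackOf a)
  cyc_comm : ∀ v, ∃ m, T.cyc (onTV v) = ((T.cyc v).map onA).rotate m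

def Aut.OrderDvd (g : Aut Q) (n : ℕ) : Prop :=
  (∀ i, (⇑g.onV)^[n] i = i) ∧ (∀ a, (⇑g.onA)^[n] a = a)

def Aut.FreeVertexOrbits (g : Aut Q) (n : ℕ) : Prop :=
  ∀ i : Q.V, ∀ m, 0 < m → m < n → (⇑g.onV)^[m] i ≠ i

structure OrbitChoice (g : Aut Q) where
  genArrow : Q.A → Q.A
  genArrow_orbit : ∀ a, ∃ m, (⇑g.onA)^[m] (genArrow a) = a
  genArrow_comm : ∀ a, genArrow (g.onA a) = genArrow a
  genArrow_idem : ∀ a, genArrow (genArrow a) = genArrow a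
  repV : Q.V → Q.V
  repV_orbit : ∀ i, ∃ m, (⇑g.onV)^[m] (repV i) = i
  repV_comm : ∀ i, repV (g.onV i) = repV i
  repV_idem : ∀ i, repV (repV i) = repV i

def sharp (g : Aut Q) (n : ℕ) (C : OrbitChoice Q g) : Quiv where
  V := Q.V
  A := {a : Q.A // C.genArrow a = a} ⊕ ({i : Q.V // C.repV i = i} × Fin (n - 1))
  s := Sum.elim (fun a => Q.s a.1) fun p => (⇑g.onV)^[p.2.1] p.1.1
  t := Sum.elim (fun a => Q.t a.1) fun p => (⇑g.onV)^[p.2.1 + 1] p.1.1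

def isoSet (g : Aut Q) (n : ℕ) (C : OrbitChoice Q g) : Set (sharp Q g n C).A :=
  Set.range Sum.inr

variable (g : Aut Q) (n : ℕ) (C : OrbitChoice Q g)

/-- An isomorphism arrow, viewed as an arrow of the localised quiver. -/
def isoArrLoc (y : {i : Q.V // C.repV i = i} × Fin (n - 1)) :
    ((sharp Q g n C).loc (isoSet Q g n C)).A :=
  Sum.inl (Sum.inr y)

/-- The inverse of an isomorphism arrow, viewed as an arrow of the localised
quiver. -/
def isoInvLoc (y : {i : Q.V // C.repV i = i} × Fin (n - 1)) :
    ((sharp Q g n C).loc (isoSet Q g n C)).A :=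
  Sum.inr ⟨Sum.inr y, ⟨y, rfl⟩⟩

/-- The chosen generating arrow of the orbit of `a`, viewed as an arrow of the
localised quiver. -/
def genLoc (a : Q.A) : ((sharp Q g n C).loc (isoSet Q g n C)).A :=
  Sum.inl (Sum.inl ⟨C.genArrow a, C.genArrow_idem a⟩)

/-- `l` consists solely of isomorphism arrows and their inverses. -/
def IsIsoList (l : List ((sharp Q g n C).loc (isoSet Q g n C)).A) : Prop :=
  ∀ x ∈ l, (∃ y, x = isoArrLoc Q g n C y) ∨ (∃ y, x = isoInvLoc Q g n C y)

/-- A choice, for every arrow `a` of `Q`, of the connecting paths `p_a` (from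
`t(a_j)` to `t(a)`) and `q_a` (from `s(a)` to `s(a_j)`) composed solely of
isomorphism arrows and their inverses, where `a_j` is the chosen generating
arrow of the orbit of `a`. -/
structure ConnData where
  P : Q.A → List ((sharp Q g n C).loc (isoSet Q g n C)).A
  Qc : Q.A → List ((sharp Q g n C).loc (isoSet Q g n C)).A
  isoP : ∀ a, IsIsoList Q g n C (P a)
  isoQc : ∀ a, IsIsoList Q g n C (Qc a)
  endP : ∀ a, IsPathFrom ((sharp Q g n C).loc (isoSet Q g n C)) (P a)
      (Q.t (C.genArrow a)) (Q.t a)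
  endQc : ∀ a, IsPathFrom ((sharp Q g n C).loc (isoSet Q g n C)) (Qc a)
      (Q.s a) (Q.s (C.genArrow a))

/-- The image of an arrow `a` of `Q` under `ξ`, as a list of arrows of the
localised quiver: `p_a ⧺ [a_j] ⧺ q_a`. -/
def xiArrList (cd : ConnData Q g n C) (a : Q.A) :
    List ((sharp Q g n C).loc (isoSet Q g n C)).A :=
  cd.P a ++ [genLoc Q g n C a] ++ cd.Qc a

/-- The image of a path of `Q` under `ξ`, as a list of arrows of the localised
quiver. -/
def xiList (cd : ConnData Q g n C) (l : List Q.A) :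
    List ((sharp Q g n C).loc (isoSet Q g n C)).A :=
  l.flatMap (xiArrList Q g n C cd)

/-- The specification of the algebra homomorphism
`ξ : kQ → kQ'`: it sends constant paths to constant paths, and the arrow `a`
to `p_a a_j q_a`. -/
def XiSpec (cd : ConnData Q g n C)
    (ξ : PathAlg k Q →ₐ[k] LocAlg k (sharp Q g n C) (isoSet Q g n C)) : Prop :=
  (∀ i : Q.V, ξ (vtx k Q i) = locVtx k (sharp Q g n C) (isoSet Q g n C) i) ∧
  ∀ a : Q.A, ξ (arr k Q a) =
    locProd k (sharp Q g n C) (isoSet Q g n C) (xiArrList Q g n C cd a)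

/-- The potential `W' = ξ(W)` on the localised quiver induced by the potential
of a brane tiling. -/
def inducedPotential (T : Tiling Q) (cd : ConnData Q g n C) :
    Potential k ((sharp Q g n C).loc (isoSet Q g n C)) :=
  (Finset.univ (α := T.TV)).toList.map fun v =>
    ((if T.isWhite v then (1 : k) else -1), xiList Q g n C cd (T.cyc v))

/-- The degree of arrows of `Q^#`: isomorphism arrows have degree `1`, the
generating arrows degree `0` (their formal inverses then get degree `-1`). -/
def sharpWeight : (sharp Q g n C).A → ℤ := Sum.elim (fun _ => 0) fun _ => 1

/-- The rotation of a cycle `l` placing the arrow `a` at the end. -/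
def rotTo (l : List Q.A) (a : Q.A) : List Q.A := l.rotate (l.idxOf a + 1)

end Quiv
namespace Quiv

section Aux1

variable (k : Type) [CommRing k] (Q : Quiv)

lemma pathOf_nil : pathOf k Q [] = 1 := rfl

lemma pathOf_cons (a : Q.A) (l : List Q.A) :
    pathOf k Q (a :: l) = arr k Q a * pathOf k Q l := by
  simp [pathOf]

lemma pathOf_append (l₁ l₂ : List Q.A) :
    pathOf k Q (l₁ ++ l₂) = pathOf k Q l₁ * pathOf k Q l₂ := by
  simp [pathOf]

lemma pathOf_singleton (a : Q.A) : pathOf k Q [a] = arr k Q a := by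
  simp [pathOf]

lemma vtx_mul_vtx (i j : Q.V) :
    vtx k Q i * vtx k Q j = if i = j then vtx k Q i else 0 := by
  have h := RingQuot.mkAlgHom_rel k (PathRel.vertex_mul (k := k) (Q := Q) i j)
  rw [map_mul] at h
  unfold vtx
  erw [h]
  by_cases hij : i = j
  · exact (congrArg (RingQuot.mkAlgHom k (PathRel k Q)) (if_pos hij)).trans (if_pos hij).symm
  · exact ((congrArg (RingQuot.mkAlgHom k (PathRel k Q)) (if_neg hij)).trans
      (map_zero _)).trans (if_neg hij).symm

lemma vtx_mul_self (i : Q.V) : vtx k Q i * vtx k Q i = vtx k Q i := by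
  simp [vtx_mul_vtx]

lemma vtx_mul_vtx_of_ne {i j : Q.V} (h : i ≠ j) : vtx k Q i * vtx k Q j = 0 := by
  simp [vtx_mul_vtx, h]

lemma vtx_t_mul_arr (a : Q.A) : vtx k Q (Q.t a) * arr k Q a = arr k Q a := by
  have h := RingQuot.mkAlgHom_rel k (PathRel.target_mul (k := k) (Q := Q) a)
  rw [map_mul] at h
  exact h

lemma arr_mul_vtx_s (a : Q.A) : arr k Q a * vtx k Q (Q.s a) = arr k Q a := by
  have h := RingQuot.mkAlgHom_rel k (PathRel.source_mul (k := k) (Q := Q) a)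
  rw [map_mul] at h
  exact h

lemma vtx_mul_pathOf (l : List Q.A) (hne : l ≠ []) :
    vtx k Q (Q.t (l.head hne)) * pathOf k Q l = pathOf k Q l := by
  cases l with
  | nil => exact absurd rfl hne
  | cons a l =>
    rw [pathOf_cons, List.head_cons, ← mul_assoc, vtx_t_mul_arr]

lemma pathOf_mul_vtx (l : List Q.A) (hne : l ≠ []) :
    pathOf k Q l * vtx k Q (Q.s (l.getLast hne)) = pathOf k Q l := by
  induction l using List.reverseRecOn with
  | nil => exact absurd rfl hne
  | append_singleton l a _ =>
    have hl : (l ++ [a]).getLast hne = a := by simp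
    rw [hl, pathOf_append, pathOf_singleton, mul_assoc, arr_mul_vtx_s]

end Aux1

section Aux2

variable (k : Type) [CommRing k] (Q : Quiv) (S : Set Q.A)

lemma locProd_nil : locProd k Q S [] = 1 := by
  simp [locProd, pathOf_nil, map_one]

lemma locProd_cons (a : (Q.loc S).A) (l : List (Q.loc S).A) :
    locProd k Q S (a :: l) = locArr k Q S a * locProd k Q S l := by
  simp [locProd, locArr, pathOf_cons, map_mul]

lemma locProd_append (l₁ l₂ : List (Q.loc S).A) :
    locProd k Q S (l₁ ++ l₂) = locProd k Q S l₁ * locProd k Q S l₂ := by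
  simp [locProd, pathOf_append, map_mul]

lemma locProd_singleton (a : (Q.loc S).A) : locProd k Q S [a] = locArr k Q S a := by
  simp [locProd, locArr, pathOf_singleton]

lemma locVtx_mul_locVtx (i j : Q.V) :
    locVtx k Q S i * locVtx k Q S j = if i = j then locVtx k Q S i else 0 := by
  rw [locVtx, locVtx, ← map_mul]
  erw [vtx_mul_vtx]
  by_cases hij : i = j
  · exact (congrArg (locMk k Q S) (if_pos hij)).trans (if_pos hij).symm
  · exact ((congrArg (locMk k Q S) (if_neg hij)).trans (map_zero _)).trans (if_neg hij).symm

lemma locVtx_mul_self (i : Q.V) : locVtx k Q S i * locVtx k Q S i = locVtx k Q S i := by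
  simp [locVtx_mul_locVtx]

lemma locVtx_t_mul_locArr (a : (Q.loc S).A) :
    locVtx k Q S ((Q.loc S).t a) * locArr k Q S a = locArr k Q S a := by
  unfold locVtx
  rw [locArr, ← map_mul, vtx_t_mul_arr]

lemma locArr_mul_locVtx_s (a : (Q.loc S).A) :
    locArr k Q S a * locVtx k Q S ((Q.loc S).s a) = locArr k Q S a := by
  unfold locVtx
  rw [locArr, ← map_mul, arr_mul_vtx_s]

lemma locVtx_mul_locProd (l : List (Q.loc S).A) (hne : l ≠ []) :
    locVtx k Q S ((Q.loc S).t (l.head hne)) * locProd k Q S l = locProd k Q S l := by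
  unfold locVtx
  rw [locProd, ← map_mul, vtx_mul_pathOf]

lemma locProd_mul_locVtx (l : List (Q.loc S).A) (hne : l ≠ []) :
    locProd k Q S l * locVtx k Q S ((Q.loc S).s (l.getLast hne)) = locProd k Q S l := by
  unfold locVtx
  rw [locProd, ← map_mul, pathOf_mul_vtx]

end Aux2

end Quiv
namespace Quiv

section PathLemmas

variable {Q : Quiv}

lemma isPathFrom_nil (u : Q.V) : IsPathFrom Q [] u u :=
  ⟨List.isChain_nil, fun _ => rfl, fun h => absurd rfl h, fun h => absurd rfl h⟩

lemma isPathFrom_cons_dest {x : Q.A} {l : List Q.A} {u v : Q.V}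
    (h : IsPathFrom Q (x :: l) u v) : v = Q.t x ∧ IsPathFrom Q l u (Q.s x) := by
  obtain ⟨hc, -, hhead, hlast⟩ := h
  refine ⟨(hhead (List.cons_ne_nil _ _)).symm, (List.isChain_cons.1 hc).2, ?_, ?_, ?_⟩
  · intro h0
    subst h0
    exact (hlast (List.cons_ne_nil _ _)).symm
  · intro hne
    have := (List.isChain_cons.1 hc).1 (l.head hne) (List.head?_eq_head hne)
    exact this.symm
  · intro hne
    have := hlast (List.cons_ne_nil _ _)
    rwa [List.getLast_cons hne] at this

lemma isPathFrom_cons {l : List Q.A} {u w : Q.V} (h : IsPathFrom Q l u w)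
    (x : Q.A) (hx : Q.s x = w) : IsPathFrom Q (x :: l) u (Q.t x) := by
  refine ⟨List.isChain_cons.2 ⟨?_, h.1⟩, by simp, fun _ => rfl, ?_⟩
  · intro y hy
    have hne : l ≠ [] := by rintro rfl; simp at hy
    rw [List.head?_eq_head hne] at hy
    obtain rfl : y = l.head hne := by simpa using hy.symm
    rw [hx, h.2.2.1 hne]
  · intro hne
    by_cases hl : l = []
    · subst hl
      simpa using hx.trans (h.2.1 rfl).symm
    · rw [List.getLast_cons hl]
      exact h.2.2.2 hl

lemma isPathFrom_append {l₁ l₂ : List Q.A} {u w v : Q.V}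
    (h₁ : IsPathFrom Q l₁ w v) (h₂ : IsPathFrom Q l₂ u w) :
    IsPathFrom Q (l₁ ++ l₂) u v := by
  induction l₁ generalizing v with
  | nil =>
    obtain rfl : w = v := h₁.2.1 rfl
    simpa using h₂
  | cons x l₁ ih =>
    obtain ⟨rfl, h₁'⟩ := isPathFrom_cons_dest h₁
    exact isPathFrom_cons (ih h₁') x rfl

end PathLemmas

end Quiv
namespace Quiv

section Ht

variable {Q : Quiv} (g : Aut Q) (n : ℕ) (C : OrbitChoice Q g)

/-- The height of a vertex: the unique `m < n` with `g^[m] (repV v) = v`. -/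
def ht (v : Q.V) : ℕ :=
  if h : ∃ m, m < n ∧ (⇑g.onV)^[m] (C.repV v) = v then h.choose else 0

lemma iterate_n_mul (ho : ∀ i, (⇑g.onV)^[n] i = i) (j : ℕ) (x : Q.V) :
    (⇑g.onV)^[n * j] x = x := by
  induction j with
  | zero => rfl
  | succ j ih => rw [Nat.mul_succ, Function.iterate_add_apply, ho, ih]

lemma exists_ht (hn : 0 < n) (ho : ∀ i, (⇑g.onV)^[n] i = i) (v : Q.V) :
    ∃ m, m < n ∧ (⇑g.onV)^[m] (C.repV v) = v := by
  obtain ⟨m, hm⟩ := C.repV_orbit v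
  refine ⟨m % n, Nat.mod_lt _ hn, ?_⟩
  calc (⇑g.onV)^[m % n] (C.repV v)
      = (⇑g.onV)^[m % n] ((⇑g.onV)^[n * (m / n)] (C.repV v)) := by
        rw [iterate_n_mul g n ho]
    _ = (⇑g.onV)^[m % n + n * (m / n)] (C.repV v) :=
        (Function.iterate_add_apply _ _ _ _).symm
    _ = v := by rw [Nat.mod_add_div]; exact hm

lemma ht_lt (hn : 0 < n) (ho : ∀ i, (⇑g.onV)^[n] i = i) (v : Q.V) :
    ht g n C v < n := by
  have h := exists_ht g n C hn ho v
  rw [ht, dif_pos h]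
  exact h.choose_spec.1

lemma ht_spec (hn : 0 < n) (ho : ∀ i, (⇑g.onV)^[n] i = i) (v : Q.V) :
    (⇑g.onV)^[ht g n C v] (C.repV v) = v := by
  have h := exists_ht g n C hn ho v
  rw [ht, dif_pos h]
  exact h.choose_spec.2

lemma iterate_inj_aux (hfree : Aut.FreeVertexOrbits Q g n) {r : Q.V} {m₁ m₂ : ℕ}
    (h₂ : m₂ < n) (hle : m₁ ≤ m₂)
    (he : (⇑g.onV)^[m₁] r = (⇑g.onV)^[m₂] r) : m₁ = m₂ := by
  have key : (⇑g.onV)^[m₂ - m₁] ((⇑g.onV)^[m₁] r) = (⇑g.onV)^[m₁] r := by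
    rw [← Function.iterate_add_apply]
    rw [Nat.sub_add_cancel hle]
    exact he.symm
  by_contra hne
  exact hfree ((⇑g.onV)^[m₁] r) (m₂ - m₁) (by omega) (by omega) key

lemma iterate_inj (hfree : Aut.FreeVertexOrbits Q g n) {r : Q.V} {m₁ m₂ : ℕ}
    (h₁ : m₁ < n) (h₂ : m₂ < n)
    (he : (⇑g.onV)^[m₁] r = (⇑g.onV)^[m₂] r) : m₁ = m₂ := by
  rcases le_total m₁ m₂ with h | h
  · exact iterate_inj_aux g n hfree h₂ h he
  · exact (iterate_inj_aux g n hfree h₁ h he.symm).symm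

lemma ht_eq_of (hn : 0 < n) (ho : ∀ i, (⇑g.onV)^[n] i = i)
    (hfree : Aut.FreeVertexOrbits Q g n) {v : Q.V} {m : ℕ} (hm : m < n)
    (hv : (⇑g.onV)^[m] (C.repV v) = v) : ht g n C v = m :=
  iterate_inj g n hfree (ht_lt g n C hn ho v) hm
    ((ht_spec g n C hn ho v).trans hv.symm)

lemma repV_iterate (m : ℕ) (v : Q.V) :
    C.repV ((⇑g.onV)^[m] v) = C.repV v := by
  induction m with
  | zero => rfl
  | succ m ih => rw [Function.iterate_succ_apply', C.repV_comm, ih]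

lemma ht_iterate_rep (hn : 0 < n) (ho : ∀ i, (⇑g.onV)^[n] i = i)
    (hfree : Aut.FreeVertexOrbits Q g n) {j : Q.V} (hj : C.repV j = j)
    {m : ℕ} (hm : m < n) : ht g n C ((⇑g.onV)^[m] j) = m := by
  apply ht_eq_of g n C hn ho hfree hm
  rw [repV_iterate, hj]

lemma repV_iterate_rep {j : Q.V} (hj : C.repV j = j) (m : ℕ) :
    C.repV ((⇑g.onV)^[m] j) = j := by rw [repV_iterate, hj]

lemma ht_iterate (hn : 0 < n) (ho : ∀ i, (⇑g.onV)^[n] i = i)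
    (hfree : Aut.FreeVertexOrbits Q g n) (v : Q.V) (m : ℕ) :
    ht g n C ((⇑g.onV)^[m] v) = (ht g n C v + m) % n := by
  apply ht_eq_of g n C hn ho hfree (Nat.mod_lt _ hn)
  rw [repV_iterate]
  calc (⇑g.onV)^[(ht g n C v + m) % n] (C.repV v)
      = (⇑g.onV)^[(ht g n C v + m) % n]
          ((⇑g.onV)^[n * ((ht g n C v + m) / n)] (C.repV v)) := by
        rw [iterate_n_mul g n ho]
    _ = (⇑g.onV)^[(ht g n C v + m) % n + n * ((ht g n C v + m) / n)]
          (C.repV v) := (Function.iterate_add_apply _ _ _ _).symm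
    _ = (⇑g.onV)^[m + ht g n C v] (C.repV v) := by
        rw [Nat.mod_add_div, Nat.add_comm]
    _ = (⇑g.onV)^[m] v := by
        rw [Function.iterate_add_apply, ht_spec g n C hn ho]

lemma s_iterate (m : ℕ) (a : Q.A) :
    Q.s ((⇑g.onA)^[m] a) = (⇑g.onV)^[m] (Q.s a) := by
  induction m with
  | zero => rfl
  | succ m ih =>
    rw [Function.iterate_succ_apply', Function.iterate_succ_apply', g.s_comm, ih]

lemma t_iterate (m : ℕ) (a : Q.A) :
    Q.t ((⇑g.onA)^[m] a) = (⇑g.onV)^[m] (Q.t a) := by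
  induction m with
  | zero => rfl
  | succ m ih =>
    rw [Function.iterate_succ_apply', Function.iterate_succ_apply', g.t_comm, ih]

lemma genArrow_iterate (m : ℕ) (a : Q.A) :
    C.genArrow ((⇑g.onA)^[m] a) = C.genArrow a := by
  induction m with
  | zero => rfl
  | succ m ih => rw [Function.iterate_succ_apply', C.genArrow_comm, ih]

end Ht

end Quiv
namespace Quiv

section EMach

variable {Q : Quiv} (g : Aut Q) (n : ℕ) (C : OrbitChoice Q g)

/-- Shorthand for the localised algebra. -/
def U' (j : {i : Q.V // C.repV i = i}) (t : ℕ) :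
    LocAlg ℂ (sharp Q g n C) (isoSet Q g n C) :=
  if h : t < n - 1 then
    locArr ℂ (sharp Q g n C) (isoSet Q g n C) (isoArrLoc Q g n C (j, ⟨t, h⟩))
  else 0

def D' (j : {i : Q.V // C.repV i = i}) (t : ℕ) :
    LocAlg ℂ (sharp Q g n C) (isoSet Q g n C) :=
  if h : t < n - 1 then
    locArr ℂ (sharp Q g n C) (isoSet Q g n C) (isoInvLoc Q g n C (j, ⟨t, h⟩))
  else 0

def Uch (j : {i : Q.V // C.repV i = i}) (a : ℕ) :
    ℕ → LocAlg ℂ (sharp Q g n C) (isoSet Q g n C)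
  | 0 => locVtx ℂ (sharp Q g n C) (isoSet Q g n C) ((⇑g.onV)^[a] j.1)
  | c + 1 => U' g n C j (a + c) * Uch j a c

def Dch (j : {i : Q.V // C.repV i = i}) :
    ℕ → ℕ → LocAlg ℂ (sharp Q g n C) (isoSet Q g n C)
  | b, 0 => locVtx ℂ (sharp Q g n C) (isoSet Q g n C) ((⇑g.onV)^[b] j.1)
  | b, c + 1 => D' g n C j b * Dch j (b + 1) c

def EE (j : {i : Q.V // C.repV i = i}) (a b : ℕ) :
    LocAlg ℂ (sharp Q g n C) (isoSet Q g n C) :=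
  if a ≤ b then Uch g n C j a (b - a) else Dch g n C j b (a - b)

lemma Uch_zero (j : {i : Q.V // C.repV i = i}) (a : ℕ) :
    Uch g n C j a 0
      = locVtx ℂ (sharp Q g n C) (isoSet Q g n C) ((⇑g.onV)^[a] j.1) := rfl

lemma Uch_succ (j : {i : Q.V // C.repV i = i}) (a c : ℕ) :
    Uch g n C j a (c + 1) = U' g n C j (a + c) * Uch g n C j a c := rfl

lemma Dch_zero (j : {i : Q.V // C.repV i = i}) (b : ℕ) :
    Dch g n C j b 0
      = locVtx ℂ (sharp Q g n C) (isoSet Q g n C) ((⇑g.onV)^[b] j.1) := rfl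

lemma Dch_succ (j : {i : Q.V // C.repV i = i}) (b c : ℕ) :
    Dch g n C j b (c + 1) = D' g n C j b * Dch g n C j (b + 1) c := rfl

lemma E_self (j : {i : Q.V // C.repV i = i}) (a : ℕ) :
    EE g n C j a a = locVtx ℂ (sharp Q g n C) (isoSet Q g n C) ((⇑g.onV)^[a] j.1) := by
  rw [EE, if_pos le_rfl, Nat.sub_self]
  rfl

-- endpoints of iso arrows (definitional)
lemma s_isoArrLoc (y : {i : Q.V // C.repV i = i} × Fin (n - 1)) :
    ((sharp Q g n C).loc (isoSet Q g n C)).s (isoArrLoc Q g n C y)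
      = (⇑g.onV)^[y.2.1] y.1.1 := rfl

lemma t_isoArrLoc (y : {i : Q.V // C.repV i = i} × Fin (n - 1)) :
    ((sharp Q g n C).loc (isoSet Q g n C)).t (isoArrLoc Q g n C y)
      = (⇑g.onV)^[y.2.1 + 1] y.1.1 := rfl

lemma s_isoInvLoc (y : {i : Q.V // C.repV i = i} × Fin (n - 1)) :
    ((sharp Q g n C).loc (isoSet Q g n C)).s (isoInvLoc Q g n C y)
      = (⇑g.onV)^[y.2.1 + 1] y.1.1 := rfl

lemma t_isoInvLoc (y : {i : Q.V // C.repV i = i} × Fin (n - 1)) :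
    ((sharp Q g n C).loc (isoSet Q g n C)).t (isoInvLoc Q g n C y)
      = (⇑g.onV)^[y.2.1] y.1.1 := rfl

lemma D_mul_U (y : {i : Q.V // C.repV i = i} × Fin (n - 1)) :
    locArr ℂ (sharp Q g n C) (isoSet Q g n C) (isoInvLoc Q g n C y) *
      locArr ℂ (sharp Q g n C) (isoSet Q g n C) (isoArrLoc Q g n C y)
    = locVtx ℂ (sharp Q g n C) (isoSet Q g n C) ((⇑g.onV)^[y.2.1] y.1.1) := by
  have h := RingQuot.mkAlgHom_rel ℂ
    (LocRel.inv_mul (k := ℂ) (Q := sharp Q g n C) (S := isoSet Q g n C)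
      ⟨Sum.inr y, ⟨y, rfl⟩⟩)
  rw [map_mul] at h
  exact h

lemma U_mul_D (y : {i : Q.V // C.repV i = i} × Fin (n - 1)) :
    locArr ℂ (sharp Q g n C) (isoSet Q g n C) (isoArrLoc Q g n C y) *
      locArr ℂ (sharp Q g n C) (isoSet Q g n C) (isoInvLoc Q g n C y)
    = locVtx ℂ (sharp Q g n C) (isoSet Q g n C) ((⇑g.onV)^[y.2.1 + 1] y.1.1) := by
  have h := RingQuot.mkAlgHom_rel ℂ
    (LocRel.mul_inv (k := ℂ) (Q := sharp Q g n C) (S := isoSet Q g n C)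
      ⟨Sum.inr y, ⟨y, rfl⟩⟩)
  rw [map_mul] at h
  exact h

lemma locVtx_mul_U' (j : {i : Q.V // C.repV i = i}) (t : ℕ) :
    locVtx ℂ (sharp Q g n C) (isoSet Q g n C) ((⇑g.onV)^[t + 1] j.1) * U' g n C j t
      = U' g n C j t := by
  rw [U']
  split
  · next h =>
      exact locVtx_t_mul_locArr ℂ (sharp Q g n C) (isoSet Q g n C)
        (isoArrLoc Q g n C (j, ⟨t, h⟩))
  · exact mul_zero _

lemma U'_mul_locVtx (j : {i : Q.V // C.repV i = i}) (t : ℕ) :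
    U' g n C j t * locVtx ℂ (sharp Q g n C) (isoSet Q g n C) ((⇑g.onV)^[t] j.1)
      = U' g n C j t := by
  rw [U']
  split
  · exact locArr_mul_locVtx_s ℂ (sharp Q g n C) (isoSet Q g n C) _
  · exact zero_mul _

lemma locVtx_mul_D' (j : {i : Q.V // C.repV i = i}) (t : ℕ) :
    locVtx ℂ (sharp Q g n C) (isoSet Q g n C) ((⇑g.onV)^[t] j.1) * D' g n C j t
      = D' g n C j t := by
  rw [D']
  split
  · next h =>
      exact locVtx_t_mul_locArr ℂ (sharp Q g n C) (isoSet Q g n C)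
        (isoInvLoc Q g n C (j, ⟨t, h⟩))
  · exact mul_zero _

lemma D'_mul_locVtx (j : {i : Q.V // C.repV i = i}) (t : ℕ) :
    D' g n C j t * locVtx ℂ (sharp Q g n C) (isoSet Q g n C) ((⇑g.onV)^[t + 1] j.1)
      = D' g n C j t := by
  rw [D']
  split
  · exact locArr_mul_locVtx_s ℂ (sharp Q g n C) (isoSet Q g n C) _
  · exact zero_mul _

lemma U'_mul_D' (j : {i : Q.V // C.repV i = i}) {t : ℕ} (h : t < n - 1) :
    U' g n C j t * D' g n C j t
      = locVtx ℂ (sharp Q g n C) (isoSet Q g n C) ((⇑g.onV)^[t + 1] j.1) := by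
  rw [U', D', dif_pos h, dif_pos h]
  exact U_mul_D g n C (j, ⟨t, h⟩)

lemma D'_mul_U' (j : {i : Q.V // C.repV i = i}) {t : ℕ} (h : t < n - 1) :
    D' g n C j t * U' g n C j t
      = locVtx ℂ (sharp Q g n C) (isoSet Q g n C) ((⇑g.onV)^[t] j.1) := by
  rw [U', D', dif_pos h, dif_pos h]
  exact D_mul_U g n C (j, ⟨t, h⟩)

lemma locVtx_mul_Uch (j : {i : Q.V // C.repV i = i}) (a c : ℕ) :
    locVtx ℂ (sharp Q g n C) (isoSet Q g n C) ((⇑g.onV)^[a + c] j.1) *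
      Uch g n C j a c = Uch g n C j a c := by
  cases c with
  | zero => exact locVtx_mul_self ℂ (sharp Q g n C) (isoSet Q g n C) _
  | succ c =>
    rw [Uch, ← mul_assoc, show a + (c + 1) = (a + c) + 1 from rfl,
      locVtx_mul_U']

lemma Uch_mul_locVtx (j : {i : Q.V // C.repV i = i}) (a c : ℕ) :
    Uch g n C j a c *
      locVtx ℂ (sharp Q g n C) (isoSet Q g n C) ((⇑g.onV)^[a] j.1)
      = Uch g n C j a c := by
  induction c with
  | zero => exact locVtx_mul_self ℂ (sharp Q g n C) (isoSet Q g n C) _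
  | succ c ih => rw [Uch, mul_assoc, ih]

lemma locVtx_mul_Dch (j : {i : Q.V // C.repV i = i}) (b c : ℕ) :
    locVtx ℂ (sharp Q g n C) (isoSet Q g n C) ((⇑g.onV)^[b] j.1) *
      Dch g n C j b c = Dch g n C j b c := by
  cases c with
  | zero => exact locVtx_mul_self ℂ (sharp Q g n C) (isoSet Q g n C) _
  | succ c => rw [Dch, ← mul_assoc, locVtx_mul_D']

lemma Dch_mul_locVtx (j : {i : Q.V // C.repV i = i}) (b c : ℕ) :
    Dch g n C j b c *
      locVtx ℂ (sharp Q g n C) (isoSet Q g n C) ((⇑g.onV)^[b + c] j.1)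
      = Dch g n C j b c := by
  induction c generalizing b with
  | zero => exact locVtx_mul_self ℂ (sharp Q g n C) (isoSet Q g n C) _
  | succ c ih =>
    rw [Dch, mul_assoc, show b + (c + 1) = (b + 1) + c by omega, ih]

lemma locVtx_mul_E (j : {i : Q.V // C.repV i = i}) (a b : ℕ) :
    locVtx ℂ (sharp Q g n C) (isoSet Q g n C) ((⇑g.onV)^[b] j.1) *
      EE g n C j a b = EE g n C j a b := by
  rw [EE]
  split
  · rename_i h
    have := locVtx_mul_Uch g n C j a (b - a)
    rwa [show a + (b - a) = b by omega] at this
  · exact locVtx_mul_Dch g n C j b (a - b)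

lemma U'_mul_E (j : {i : Q.V // C.repV i = i}) {t : ℕ} (ht : t < n - 1) (a : ℕ) :
    U' g n C j t * EE g n C j a t = EE g n C j a (t + 1) := by
  rcases Nat.lt_or_ge t a with hat | hat
  · rcases Nat.eq_or_lt_of_le hat with heq | hlt
    · subst heq
      rw [EE, if_neg (by omega), show t + 1 - t = 1 by omega, Dch_succ, Dch_zero,
        ← mul_assoc, U'_mul_D' g n C j ht]
      erw [locVtx_mul_self, E_self]
    · rw [EE, if_neg (by omega), EE, if_neg (by omega),
        show a - t = (a - (t + 1)) + 1 by omega, Dch_succ, ← mul_assoc,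
        U'_mul_D' g n C j ht, locVtx_mul_Dch]
  · rw [EE, if_pos hat, EE, if_pos (by omega),
      show t + 1 - a = (t - a) + 1 by omega, Uch_succ,
      show a + (t - a) = t by omega]

lemma D'_mul_E (j : {i : Q.V // C.repV i = i}) {t : ℕ} (ht : t < n - 1) (a : ℕ) :
    D' g n C j t * EE g n C j a (t + 1) = EE g n C j a t := by
  rcases Nat.lt_or_ge t a with hat | hat
  · rcases Nat.eq_or_lt_of_le hat with heq | hlt
    · subst heq
      rw [E_self, D'_mul_locVtx, EE, if_neg (by omega),
        show t + 1 - t = 1 by omega, Dch_succ, Dch_zero, D'_mul_locVtx]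
    · rw [EE, if_neg (by omega), EE, if_neg (by omega),
        show a - t = (a - (t + 1)) + 1 by omega, Dch_succ]
  · rw [EE, if_pos (by omega), show t + 1 - a = (t - a) + 1 by omega, Uch_succ,
      show a + (t - a) = t by omega, ← mul_assoc, D'_mul_U' g n C j ht]
    have h2 := locVtx_mul_Uch g n C j a (t - a)
    rw [show a + (t - a) = t by omega] at h2
    rw [h2, EE, if_pos hat]

end EMach

end Quiv
namespace Quiv

section IsoPath

variable {Q : Quiv} (g : Aut Q) (n : ℕ) (C : OrbitChoice Q g)

lemma wgt_isoArrLoc (y : {i : Q.V // C.repV i = i} × Fin (n - 1)) :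
    locWeight (sharp Q g n C) (isoSet Q g n C) (sharpWeight Q g n C)
      (isoArrLoc Q g n C y) = 1 := rfl

lemma wgt_isoInvLoc (y : {i : Q.V // C.repV i = i} × Fin (n - 1)) :
    locWeight (sharp Q g n C) (isoSet Q g n C) (sharpWeight Q g n C)
      (isoInvLoc Q g n C y) = -1 := rfl

lemma wgt_genLoc (a : Q.A) :
    locWeight (sharp Q g n C) (isoSet Q g n C) (sharpWeight Q g n C)
      (genLoc Q g n C a) = 0 := rfl

lemma isPathFrom_singleton {Q₀ : Quiv} (a : Q₀.A) :
    IsPathFrom Q₀ [a] (Q₀.s a) (Q₀.t a) :=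
  ⟨List.isChain_singleton _, by simp, fun _ => rfl, fun _ => rfl⟩

lemma iso_path_eq (hn : 0 < n) (ho : ∀ i, (⇑g.onV)^[n] i = i)
    (hfree : Aut.FreeVertexOrbits Q g n)
    (r : List ((sharp Q g n C).loc (isoSet Q g n C)).A)
    (hiso : IsIsoList Q g n C r) :
    ∀ u v, IsPathFrom ((sharp Q g n C).loc (isoSet Q g n C)) r u v →
    C.repV v = C.repV u ∧
    (r.map (locWeight (sharp Q g n C) (isoSet Q g n C)
        (sharpWeight Q g n C))).sum = (ht g n C v : ℤ) - ht g n C u ∧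
    locProd ℂ (sharp Q g n C) (isoSet Q g n C) r *
        locVtx ℂ (sharp Q g n C) (isoSet Q g n C) u
      = EE g n C ⟨C.repV u, C.repV_idem u⟩ (ht g n C u) (ht g n C v) := by
  induction r with
  | nil =>
    intro u v hp
    obtain rfl : u = v := hp.2.1 rfl
    refine ⟨rfl, by simp, ?_⟩
    rw [locProd_nil, one_mul, E_self]
    congr 1
    exact (ht_spec g n C hn ho u).symm
  | cons x r ih =>
    intro u v hp
    obtain ⟨rfl, hr⟩ := isPathFrom_cons_dest hp
    obtain ⟨hrep, hdeg, heq⟩ := ih (fun z hz => hiso z (List.mem_cons_of_mem _ hz))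
      u (((sharp Q g n C).loc (isoSet Q g n C)).s x) hr
    have hn1 : 1 ≤ n := hn
    rcases hiso x (List.mem_cons_self) with ⟨y, rfl⟩ | ⟨y, rfl⟩
    · -- iso arrow, from height y.2 to height y.2+1
      have hy2 : y.2.1 < n - 1 := y.2.isLt
      have hwrep : C.repV (((sharp Q g n C).loc (isoSet Q g n C)).s
          (isoArrLoc Q g n C y)) = y.1.1 := by
        rw [s_isoArrLoc]
        exact repV_iterate_rep g C y.1.2 _
      have hvrep : C.repV (((sharp Q g n C).loc (isoSet Q g n C)).t
          (isoArrLoc Q g n C y)) = y.1.1 := by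
        rw [t_isoArrLoc]
        exact repV_iterate_rep g C y.1.2 _
      have hwht : ht g n C (((sharp Q g n C).loc (isoSet Q g n C)).s
          (isoArrLoc Q g n C y)) = y.2.1 := by
        rw [s_isoArrLoc]
        exact ht_iterate_rep g n C hn ho hfree y.1.2 (by omega)
      have hvht : ht g n C (((sharp Q g n C).loc (isoSet Q g n C)).t
          (isoArrLoc Q g n C y)) = y.2.1 + 1 := by
        rw [t_isoArrLoc]
        exact ht_iterate_rep g n C hn ho hfree y.1.2 (by omega)
      have hju : (⟨C.repV u, C.repV_idem u⟩ : {i : Q.V // C.repV i = i}) = y.1 :=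
        Subtype.ext (by rw [← hwrep, hrep])
      refine ⟨hvrep.trans (hwrep.symm.trans hrep), ?_, ?_⟩
      · rw [List.map_cons, List.sum_cons, wgt_isoArrLoc, hdeg, hvht, hwht]
        push_cast
        ring
      · rw [locProd_cons, mul_assoc, heq, hvht]
        have harr : locArr ℂ (sharp Q g n C) (isoSet Q g n C)
            (isoArrLoc Q g n C y)
            = U' g n C ⟨C.repV u, C.repV_idem u⟩ y.2.1 := by
          rw [U', dif_pos hy2]
          congr 1
          rw [hju]
        rw [harr, ← hwht, U'_mul_E g n C _ (by rw [hwht]; exact hy2), hwht]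
    · -- inverse iso arrow, from height y.2+1 to height y.2
      have hy2 : y.2.1 < n - 1 := y.2.isLt
      have hwrep : C.repV (((sharp Q g n C).loc (isoSet Q g n C)).s
          (isoInvLoc Q g n C y)) = y.1.1 := by
        rw [s_isoInvLoc]
        exact repV_iterate_rep g C y.1.2 _
      have hvrep : C.repV (((sharp Q g n C).loc (isoSet Q g n C)).t
          (isoInvLoc Q g n C y)) = y.1.1 := by
        rw [t_isoInvLoc]
        exact repV_iterate_rep g C y.1.2 _
      have hwht : ht g n C (((sharp Q g n C).loc (isoSet Q g n C)).s
          (isoInvLoc Q g n C y)) = y.2.1 + 1 := by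
        rw [s_isoInvLoc]
        exact ht_iterate_rep g n C hn ho hfree y.1.2 (by omega)
      have hvht : ht g n C (((sharp Q g n C).loc (isoSet Q g n C)).t
          (isoInvLoc Q g n C y)) = y.2.1 := by
        rw [t_isoInvLoc]
        exact ht_iterate_rep g n C hn ho hfree y.1.2 (by omega)
      have hju : (⟨C.repV u, C.repV_idem u⟩ : {i : Q.V // C.repV i = i}) = y.1 :=
        Subtype.ext (by rw [← hwrep, hrep])
      refine ⟨hvrep.trans (hwrep.symm.trans hrep), ?_, ?_⟩
      · rw [List.map_cons, List.sum_cons, wgt_isoInvLoc, hdeg, hvht, hwht]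
        push_cast
        ring
      · rw [locProd_cons, mul_assoc, heq, hvht]
        have harr : locArr ℂ (sharp Q g n C) (isoSet Q g n C)
            (isoInvLoc Q g n C y)
            = D' g n C ⟨C.repV u, C.repV_idem u⟩ y.2.1 := by
          rw [D', dif_pos hy2]
          congr 1
          rw [hju]
        rw [harr, hwht, D'_mul_E g n C _ hy2]

/-- The canonical flip of an arrow of the localised quiver: exchanges the
isomorphism arrows with their formal inverses. -/
def flipArr (x : ((sharp Q g n C).loc (isoSet Q g n C)).A) :
    ((sharp Q g n C).loc (isoSet Q g n C)).A :=
  match x with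
  | Sum.inl (Sum.inl a) => Sum.inl (Sum.inl a)
  | Sum.inl (Sum.inr y) => Sum.inr ⟨Sum.inr y, ⟨y, rfl⟩⟩
  | Sum.inr a => Sum.inl a.1

def revIso (r : List ((sharp Q g n C).loc (isoSet Q g n C)).A) :
    List ((sharp Q g n C).loc (isoSet Q g n C)).A :=
  (r.map (flipArr g n C)).reverse

lemma revIso_spec (r : List ((sharp Q g n C).loc (isoSet Q g n C)).A)
    (hiso : IsIsoList Q g n C r) :
    ∀ u v, IsPathFrom ((sharp Q g n C).loc (isoSet Q g n C)) r u v →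
    IsIsoList Q g n C (revIso g n C r) ∧
    IsPathFrom ((sharp Q g n C).loc (isoSet Q g n C)) (revIso g n C r) v u ∧
    ((revIso g n C r).map (locWeight (sharp Q g n C) (isoSet Q g n C)
        (sharpWeight Q g n C))).sum
      = -(r.map (locWeight (sharp Q g n C) (isoSet Q g n C)
        (sharpWeight Q g n C))).sum := by
  induction r with
  | nil =>
    intro u v hp
    obtain rfl : u = v := hp.2.1 rfl
    exact ⟨fun z hz => by simp [revIso] at hz, isPathFrom_nil u, by simp [revIso]⟩
  | cons x r ih =>
    intro u v hp
    obtain ⟨rfl, hr⟩ := isPathFrom_cons_dest hp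
    obtain ⟨h1, h2, h3⟩ := ih (fun z hz => hiso z (List.mem_cons_of_mem _ hz))
      u (((sharp Q g n C).loc (isoSet Q g n C)).s x) hr
    have hrev : revIso g n C (x :: r) = revIso g n C r ++ [flipArr g n C x] := by
      simp [revIso]
    rcases hiso x (List.mem_cons_self) with ⟨y, rfl⟩ | ⟨y, rfl⟩
    · have hfl : flipArr g n C (isoArrLoc Q g n C y) = isoInvLoc Q g n C y := rfl
      refine ⟨?_, ?_, ?_⟩
      · intro z hz
        rw [hrev, hfl] at hz
        rcases List.mem_append.1 hz with hz | hz
        · exact h1 z hz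
        · right
          exact ⟨y, by simpa using hz⟩
      · rw [hrev, hfl]
        exact isPathFrom_append h2 (isPathFrom_singleton _)
      · rw [hrev, hfl]
        simp only [List.map_append, List.sum_append, List.map_cons, List.sum_cons,
          wgt_isoArrLoc, wgt_isoInvLoc, h3]
        simp
    · have hfl : flipArr g n C (isoInvLoc Q g n C y) = isoArrLoc Q g n C y := rfl
      refine ⟨?_, ?_, ?_⟩
      · intro z hz
        rw [hrev, hfl] at hz
        rcases List.mem_append.1 hz with hz | hz
        · exact h1 z hz
        · left
          exact ⟨y, by simpa using hz⟩
      · rw [hrev, hfl]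
        exact isPathFrom_append h2 (isPathFrom_singleton _)
      · rw [hrev, hfl]
        simp only [List.map_append, List.sum_append, List.map_cons, List.sum_cons,
          wgt_isoArrLoc, wgt_isoInvLoc, h3]
        simp

end IsoPath

end Quiv
namespace Quiv

section Main

variable {Q : Quiv} (g : Aut Q) (n : ℕ) (C : OrbitChoice Q g)
  (cd : ConnData Q g n C)
  (ξ : PathAlg ℂ Q →ₐ[ℂ] LocAlg ℂ (sharp Q g n C) (isoSet Q g n C))

lemma xi_arr (hξ : XiSpec ℂ Q g n C cd ξ) (a : Q.A) :
    ξ (arr ℂ Q a)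
      = locProd ℂ (sharp Q g n C) (isoSet Q g n C) (cd.P a) *
        locArr ℂ (sharp Q g n C) (isoSet Q g n C) (genLoc Q g n C a) *
        locProd ℂ (sharp Q g n C) (isoSet Q g n C) (cd.Qc a) := by
  rw [hξ.2 a, xiArrList, locProd_append, locProd_append, locProd_singleton]

lemma xi_pathOf (hξ : XiSpec ℂ Q g n C cd ξ) (p : List Q.A) :
    ξ (pathOf ℂ Q p)
      = locProd ℂ (sharp Q g n C) (isoSet Q g n C) (xiList Q g n C cd p) := by
  induction p with
  | nil =>
    rw [pathOf_nil, map_one, xiList, List.flatMap_nil, locProd_nil]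
  | cons a p ih =>
    rw [pathOf_cons, map_mul, ih, hξ.2 a,
      show xiList Q g n C cd (a :: p)
        = xiArrList Q g n C cd a ++ xiList Q g n C cd p from by simp [xiList],
      locProd_append]

lemma dvd_mod_sub (x : ℤ) : (n : ℤ) ∣ x % n - x :=
  ⟨-(x / n), by rw [Int.emod_def]; ring⟩

lemma deg_xiArrList (hn : 0 < n) (ho : ∀ i, (⇑g.onV)^[n] i = i)
    (hfree : Aut.FreeVertexOrbits Q g n) (a : Q.A) :
    (n : ℤ) ∣ ((xiArrList Q g n C cd a).map
      (locWeight (sharp Q g n C) (isoSet Q g n C) (sharpWeight Q g n C))).sum := by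
  obtain ⟨m, hm⟩ := C.genArrow_orbit a
  have hta : Q.t a = (⇑g.onV)^[m] (Q.t (C.genArrow a)) := by
    conv_lhs => rw [← hm]
    rw [t_iterate]
  have hsa : Q.s a = (⇑g.onV)^[m] (Q.s (C.genArrow a)) := by
    conv_lhs => rw [← hm]
    rw [s_iterate]
  have e1 := (iso_path_eq g n C hn ho hfree (cd.P a) (cd.isoP a) _ _ (cd.endP a)).2.1
  have e2 := (iso_path_eq g n C hn ho hfree (cd.Qc a) (cd.isoQc a) _ _ (cd.endQc a)).2.1
  have h1 : ht g n C (Q.t a) = (ht g n C (Q.t (C.genArrow a)) + m) % n := by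
    rw [hta, ht_iterate g n C hn ho hfree]
  have h2 : ht g n C (Q.s a) = (ht g n C (Q.s (C.genArrow a)) + m) % n := by
    rw [hsa, ht_iterate g n C hn ho hfree]
  rw [xiArrList, List.map_append, List.map_append, List.sum_append,
    List.sum_append, List.map_singleton, List.sum_singleton, wgt_genLoc,
    e1, e2, h1, h2]
  have d1 := dvd_mod_sub n ((ht g n C (Q.t (C.genArrow a)) + m : ℕ) : ℤ)
  have d2 := dvd_mod_sub n ((ht g n C (Q.s (C.genArrow a)) + m : ℕ) : ℤ)
  have hre : ((((ht g n C (Q.t (C.genArrow a)) + m) % n : ℕ) : ℤ) -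
        (ht g n C (Q.t (C.genArrow a)) : ℤ) + 0 +
        ((ht g n C (Q.s (C.genArrow a)) : ℤ) -
          (((ht g n C (Q.s (C.genArrow a)) + m) % n : ℕ) : ℤ)))
      = ((((ht g n C (Q.t (C.genArrow a)) + m : ℕ) : ℤ) % n : ℤ) -
          ((ht g n C (Q.t (C.genArrow a)) + m : ℕ) : ℤ)) -
        ((((ht g n C (Q.s (C.genArrow a)) + m : ℕ) : ℤ) % n : ℤ) -
          ((ht g n C (Q.s (C.genArrow a)) + m : ℕ) : ℤ)) := by
    push_cast
    ring
  rw [hre]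
  exact dvd_sub d1 d2

lemma deg_xiList (hn : 0 < n) (ho : ∀ i, (⇑g.onV)^[n] i = i)
    (hfree : Aut.FreeVertexOrbits Q g n) (p : List Q.A) :
    (n : ℤ) ∣ ((xiList Q g n C cd p).map
      (locWeight (sharp Q g n C) (isoSet Q g n C) (sharpWeight Q g n C))).sum := by
  induction p with
  | nil => simp [xiList]
  | cons a p ih =>
    rw [xiList, List.flatMap_cons, List.map_append, List.sum_append]
    exact dvd_add (deg_xiArrList g n C cd hn ho hfree a) ih

lemma key_lemma (hn : 0 < n) (ho : ∀ i, (⇑g.onV)^[n] i = i)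
    (hfree : Aut.FreeVertexOrbits Q g n) (hξ : XiSpec ℂ Q g n C cd ξ)
    (l : List ((sharp Q g n C).loc (isoSet Q g n C)).A) :
    ∀ u v, IsPathFrom ((sharp Q g n C).loc (isoSet Q g n C)) l u v →
    ∃ (p : List Q.A) (w : Q.V) (q : List ((sharp Q g n C).loc (isoSet Q g n C)).A),
      IsPathFrom Q p u w ∧ IsIsoList Q g n C q ∧
      IsPathFrom ((sharp Q g n C).loc (isoSet Q g n C)) q w v ∧
      (l = [] ∨ p ≠ [] ∨ q ≠ []) ∧
      locProd ℂ (sharp Q g n C) (isoSet Q g n C) l *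
          locVtx ℂ (sharp Q g n C) (isoSet Q g n C) u
        = locProd ℂ (sharp Q g n C) (isoSet Q g n C) q *
          ξ (vtx ℂ Q w * pathOf ℂ Q p) ∧
      (l.map (locWeight (sharp Q g n C) (isoSet Q g n C) (sharpWeight Q g n C))).sum
        = (q.map (locWeight (sharp Q g n C) (isoSet Q g n C)
            (sharpWeight Q g n C))).sum +
          ((xiList Q g n C cd p).map (locWeight (sharp Q g n C) (isoSet Q g n C)
            (sharpWeight Q g n C))).sum := by
  induction l with
  | nil =>
    intro u v hp
    obtain rfl : u = v := hp.2.1 rfl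
    refine ⟨[], u, [], isPathFrom_nil (Q := Q) u, fun z hz => by simp at hz,
      isPathFrom_nil (Q := (sharp Q g n C).loc (isoSet Q g n C)) u,
      Or.inl rfl, ?_, by simp [xiList]⟩
    simp only [locProd_nil, one_mul, pathOf_nil, mul_one]
    erw [hξ.1]
  | cons x l ih =>
    intro u v hp
    obtain ⟨rfl, hl⟩ := isPathFrom_cons_dest hp
    obtain ⟨p, w, q, hpP, hqI, hqP, hne, heq, hdeg⟩ :=
      ih u (((sharp Q g n C).loc (isoSet Q g n C)).s x) hl
    have step_iso : ((∃ y, x = isoArrLoc Q g n C y) ∨ (∃ y, x = isoInvLoc Q g n C y)) →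
        ∃ (p : List Q.A) (w : Q.V)
          (q : List ((sharp Q g n C).loc (isoSet Q g n C)).A),
          IsPathFrom Q p u w ∧ IsIsoList Q g n C q ∧
          IsPathFrom ((sharp Q g n C).loc (isoSet Q g n C)) q w
            (((sharp Q g n C).loc (isoSet Q g n C)).t x) ∧
          (x :: l = [] ∨ p ≠ [] ∨ q ≠ []) ∧
          locProd ℂ (sharp Q g n C) (isoSet Q g n C) (x :: l) *
              locVtx ℂ (sharp Q g n C) (isoSet Q g n C) u
            = locProd ℂ (sharp Q g n C) (isoSet Q g n C) q *
              ξ (vtx ℂ Q w * pathOf ℂ Q p) ∧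
          ((x :: l).map (locWeight (sharp Q g n C) (isoSet Q g n C)
              (sharpWeight Q g n C))).sum
            = (q.map (locWeight (sharp Q g n C) (isoSet Q g n C)
                (sharpWeight Q g n C))).sum +
              ((xiList Q g n C cd p).map (locWeight (sharp Q g n C)
                (isoSet Q g n C) (sharpWeight Q g n C))).sum := by
      intro hx
      refine ⟨p, w, x :: q, hpP, ?_, isPathFrom_cons hqP x rfl,
        Or.inr (Or.inr (List.cons_ne_nil _ _)), ?_, ?_⟩
      · intro z hz
        rcases List.mem_cons.1 hz with rfl | hz
        · exact hx
        · exact hqI z hz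
      · rw [locProd_cons, locProd_cons, mul_assoc, mul_assoc, heq]
      · rw [List.map_cons, List.sum_cons, List.map_cons, List.sum_cons, hdeg]
        ring
    rcases x with (b | y) | z
    · -- generating arrow
      set b1 : Q.A := b.1 with hb1
      have hsx : ((sharp Q g n C).loc (isoSet Q g n C)).s (Sum.inl (Sum.inl b))
          = Q.s b1 := rfl
      have htx : ((sharp Q g n C).loc (isoSet Q g n C)).t (Sum.inl (Sum.inl b))
          = Q.t b1 := rfl
      -- data about q
      obtain ⟨hqrep, hqdeg, hqeq⟩ :=
        iso_path_eq g n C hn ho hfree q hqI w _ hqP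
    -- heights
      set m : ℕ := n + ht g n C w - ht g n C (Q.s b1) with hmdef
      set b' : Q.A := (⇑g.onA)^[m] b1 with hb'
      have hhlt : ht g n C (Q.s b1) < n := ht_lt g n C hn ho _
      have hsb' : Q.s b' = w := by
        rw [hb', s_iterate]
        conv_lhs => rw [← ht_spec g n C hn ho (Q.s b1),
          ← Function.iterate_add_apply]
        rw [show m + ht g n C (Q.s b1) = n + ht g n C w by omega,
          Function.iterate_add_apply, ho]
        rw [hsx] at hqrep
        rw [hqrep]
        exact ht_spec g n C hn ho w
      have hga : C.genArrow b' = b1 := by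
        rw [hb', genArrow_iterate]
        exact b.2
      have hgenLoc : genLoc Q g n C b' = Sum.inl (Sum.inl b) := by
        rw [genLoc]
        congr 1
        congr 1
        exact Subtype.ext hga
      -- reverse of P b'
      have hPb' := cd.endP b'
      rw [hga] at hPb'
      obtain ⟨hq''I, hq''P, hq''deg⟩ :=
        revIso_spec g n C (cd.P b') (cd.isoP b') _ _ hPb'
      -- concatenated loop at t b1
      have hloop : IsPathFrom ((sharp Q g n C).loc (isoSet Q g n C))
          (revIso g n C (cd.P b') ++ cd.P b') (Q.t b1) (Q.t b1) :=
        isPathFrom_append hq''P hPb'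
      have hloopI : IsIsoList Q g n C (revIso g n C (cd.P b') ++ cd.P b') := by
        intro z hz
        rcases List.mem_append.1 hz with hz | hz
        · exact hq''I z hz
        · exact cd.isoP b' z hz
      have hloopEq := (iso_path_eq g n C hn ho hfree _ hloopI _ _ hloop).2.2
      rw [E_self] at hloopEq
      have hvtx : (⇑g.onV)^[ht g n C (Q.t b1)]
          ((⟨C.repV (Q.t b1), C.repV_idem (Q.t b1)⟩ : {i : Q.V // C.repV i = i}) : Q.V)
          = Q.t b1 := ht_spec g n C hn ho (Q.t b1)
      rw [hvtx, locProd_append] at hloopEq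
      -- Qc b' comparison with q
      have hQcP := cd.endQc b'
      rw [hga, hsb'] at hQcP
      obtain ⟨-, hQcdeg, hQceq⟩ :=
        iso_path_eq g n C hn ho hfree (cd.Qc b') (cd.isoQc b') _ _ hQcP
      rw [hsx] at hqeq hqdeg
      have hQcq : locProd ℂ (sharp Q g n C) (isoSet Q g n C) (cd.Qc b') *
          locVtx ℂ (sharp Q g n C) (isoSet Q g n C) w
          = locProd ℂ (sharp Q g n C) (isoSet Q g n C) q *
            locVtx ℂ (sharp Q g n C) (isoSet Q g n C) w := by
        rw [hQceq, hqeq]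
      refine ⟨b' :: p, Q.t b', revIso g n C (cd.P b'), ?_, hq''I, ?_,
        Or.inr (Or.inl (List.cons_ne_nil _ _)), ?_, ?_⟩
      · exact isPathFrom_cons hpP b' hsb'
      · rw [htx]
        exact hq''P
      · -- the multiplicative identity
        have hXabs : locVtx ℂ (sharp Q g n C) (isoSet Q g n C) (Q.t b1) *
            locArr ℂ (sharp Q g n C) (isoSet Q g n C) (Sum.inl (Sum.inl b))
            = locArr ℂ (sharp Q g n C) (isoSet Q g n C) (Sum.inl (Sum.inl b)) :=
          locVtx_t_mul_locArr ℂ (sharp Q g n C) (isoSet Q g n C) (Sum.inl (Sum.inl b))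
        have e1 : locProd ℂ (sharp Q g n C) (isoSet Q g n C) (revIso g n C (cd.P b')) *
            locProd ℂ (sharp Q g n C) (isoSet Q g n C) (cd.P b') *
            locArr ℂ (sharp Q g n C) (isoSet Q g n C) (Sum.inl (Sum.inl b))
            = locArr ℂ (sharp Q g n C) (isoSet Q g n C) (Sum.inl (Sum.inl b)) := by
          rw [← hXabs, ← mul_assoc, hloopEq]
        have hvw : ξ (vtx ℂ Q w * pathOf ℂ Q p)
            = locVtx ℂ (sharp Q g n C) (isoSet Q g n C) w * ξ (pathOf ℂ Q p) := by
          rw [map_mul, hξ.1]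
        have h1 : ξ (vtx ℂ Q (Q.t b') * pathOf ℂ Q (b' :: p))
            = locProd ℂ (sharp Q g n C) (isoSet Q g n C) (cd.P b') *
              (locArr ℂ (sharp Q g n C) (isoSet Q g n C) (Sum.inl (Sum.inl b)) *
              (locProd ℂ (sharp Q g n C) (isoSet Q g n C) (cd.Qc b') *
              (locVtx ℂ (sharp Q g n C) (isoSet Q g n C) w * ξ (pathOf ℂ Q p)))) := by
          rw [pathOf_cons, ← mul_assoc, vtx_t_mul_arr, ← arr_mul_vtx_s ℂ Q b',
            hsb', map_mul, map_mul, xi_arr g n C cd ξ hξ b', hgenLoc, hξ.1]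
          simp only [mul_assoc]
          rfl
        erw [locProd_cons, mul_assoc, heq, hvw, h1]
        simp only [← mul_assoc]
        rw [e1, mul_assoc _ (locProd ℂ (sharp Q g n C) (isoSet Q g n C) (cd.Qc b'))
          (locVtx ℂ (sharp Q g n C) (isoSet Q g n C) w), hQcq, ← mul_assoc]
      · -- degrees
        have hx1 : ((xiList Q g n C cd (b' :: p)).map
              (locWeight (sharp Q g n C) (isoSet Q g n C) (sharpWeight Q g n C))).sum
            = ((xiArrList Q g n C cd b').map
              (locWeight (sharp Q g n C) (isoSet Q g n C) (sharpWeight Q g n C))).sum +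
              ((xiList Q g n C cd p).map
              (locWeight (sharp Q g n C) (isoSet Q g n C) (sharpWeight Q g n C))).sum := by
          rw [show xiList Q g n C cd (b' :: p)
              = xiArrList Q g n C cd b' ++ xiList Q g n C cd p from by simp [xiList],
            List.map_append, List.sum_append]
        have hx2 : ((xiArrList Q g n C cd b').map
              (locWeight (sharp Q g n C) (isoSet Q g n C) (sharpWeight Q g n C))).sum
            = ((cd.P b').map
              (locWeight (sharp Q g n C) (isoSet Q g n C) (sharpWeight Q g n C))).sum +
              ((cd.Qc b').map
              (locWeight (sharp Q g n C) (isoSet Q g n C) (sharpWeight Q g n C))).sum := by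
          rw [xiArrList, List.map_append, List.map_append, List.sum_append,
            List.sum_append, List.map_singleton, List.sum_singleton, wgt_genLoc]
          ring
        have hx3 : locWeight (sharp Q g n C) (isoSet Q g n C) (sharpWeight Q g n C)
            (Sum.inl (Sum.inl b)) = 0 := rfl
        erw [List.map_cons, List.sum_cons, hdeg, hx1, hx2, hq''deg, hQcdeg, hqdeg, hx3]
        ring
    · exact step_iso (Or.inl ⟨y, rfl⟩)
    · obtain ⟨y, hy⟩ := z.2
      have hz : Sum.inr z = isoInvLoc Q g n C y := by
        rw [isoInvLoc]
        congr 1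
        exact Subtype.ext hy.symm
      exact step_iso (Or.inr ⟨y, hz⟩)

end Main

end Quiv
open Quiv in
/-- Every path `p'` in `ℂQ'` can be written as `p' = q·ξ(p)`
for some path `p ∈ ℂQ` and some path `q ∈ ℂQ'` composed solely of isomorphism
arrows and their inverses.  In particular, if `deg(p') ≡ 0 mod n` then `p'`
lies in the image of `ξ`. -/
theorem statement_5 (Q : Quiv) (T : Quiv.Tiling Q) (g : Quiv.TAut Q T) (n : ℕ)
    (hn : 0 < n)
    (horder : Quiv.Aut.OrderDvd Q g.toAut n)
    (horderTV : ∀ v, (⇑g.onTV)^[n] v = v)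
    (hfree : Quiv.Aut.FreeVertexOrbits Q g.toAut n)
    (C : Quiv.OrbitChoice Q g.toAut)
    (cd : Quiv.ConnData Q g.toAut n C)
    (ξ : PathAlg ℂ Q →ₐ[ℂ] LocAlg ℂ (sharp Q g.toAut n C) (isoSet Q g.toAut n C))
    (hξ : XiSpec ℂ Q g.toAut n C cd ξ) :
    ∀ l : List ((sharp Q g.toAut n C).loc (isoSet Q g.toAut n C)).A,
      Composable ((sharp Q g.toAut n C).loc (isoSet Q g.toAut n C)) l →
      (∃ (p : List Q.A) (q : List ((sharp Q g.toAut n C).loc (isoSet Q g.toAut n C)).A),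
          Composable Q p ∧ IsIsoList Q g.toAut n C q ∧
          Composable ((sharp Q g.toAut n C).loc (isoSet Q g.toAut n C)) q ∧
          locProd ℂ (sharp Q g.toAut n C) (isoSet Q g.toAut n C) l =
            locProd ℂ (sharp Q g.toAut n C) (isoSet Q g.toAut n C) q * ξ (pathOf ℂ Q p)) ∧
      ((n : ℤ) ∣ (l.map (locWeight (sharp Q g.toAut n C) (isoSet Q g.toAut n C)
            (sharpWeight Q g.toAut n C))).sum →
        locProd ℂ (sharp Q g.toAut n C) (isoSet Q g.toAut n C) l ∈ Set.range ξ) := by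
  intro l hcomp
  have ho := horder.1
  by_cases hl : l = []
  · subst hl
    constructor
    · refine ⟨[], [], List.isChain_nil, fun z hz => by simp at hz,
        List.isChain_nil, ?_⟩
      rw [locProd_nil, pathOf_nil, map_one, one_mul]
    · intro _
      exact ⟨1, by rw [map_one, locProd_nil]⟩
  · have hp : IsPathFrom ((sharp Q g.toAut n C).loc (isoSet Q g.toAut n C)) l
        (((sharp Q g.toAut n C).loc (isoSet Q g.toAut n C)).s (l.getLast hl))
        (((sharp Q g.toAut n C).loc (isoSet Q g.toAut n C)).t (l.head hl)) :=
      ⟨hcomp, fun h => absurd h hl, fun _ => rfl, fun _ => rfl⟩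
    obtain ⟨p, w, q, hpP, hqI, hqP, hne, heq, hdeg⟩ :=
      key_lemma g.toAut n C cd ξ hn ho hfree hξ l _ _ hp
    have hlu : locProd ℂ (sharp Q g.toAut n C) (isoSet Q g.toAut n C) l
        = locProd ℂ (sharp Q g.toAut n C) (isoSet Q g.toAut n C) l *
          locVtx ℂ (sharp Q g.toAut n C) (isoSet Q g.toAut n C)
            (((sharp Q g.toAut n C).loc (isoSet Q g.toAut n C)).s (l.getLast hl)) :=
      (locProd_mul_locVtx ℂ (sharp Q g.toAut n C) (isoSet Q g.toAut n C) l hl).symm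
    constructor
    · -- Part 1
      refine ⟨p, q, hpP.1, hqI, hqP.1, ?_⟩
      rw [hlu, heq]
      by_cases hp0 : p = []
      · subst hp0
        have hq0 : q ≠ [] := by
          rcases hne with h | h | h
          · exact absurd h hl
          · exact absurd rfl h
          · exact h
        rw [pathOf_nil, mul_one, hξ.1, map_one, mul_one]
        have h2 := locProd_mul_locVtx ℂ (sharp Q g.toAut n C) (isoSet Q g.toAut n C) q hq0
        rwa [hqP.2.2.2 hq0] at h2
      · have h2 := vtx_mul_pathOf ℂ Q p hp0
        rw [hpP.2.2.1 hp0] at h2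
        rw [h2]
    · -- Part 2
      intro hdvd
      have hxi := deg_xiList g.toAut n C cd hn ho hfree p
      have hdq : (n : ℤ) ∣ (q.map (locWeight (sharp Q g.toAut n C)
          (isoSet Q g.toAut n C) (sharpWeight Q g.toAut n C))).sum := by
        have h3 : (q.map (locWeight (sharp Q g.toAut n C)
            (isoSet Q g.toAut n C) (sharpWeight Q g.toAut n C))).sum
            = (l.map (locWeight (sharp Q g.toAut n C)
              (isoSet Q g.toAut n C) (sharpWeight Q g.toAut n C))).sum -
              ((xiList Q g.toAut n C cd p).map (locWeight (sharp Q g.toAut n C)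
              (isoSet Q g.toAut n C) (sharpWeight Q g.toAut n C))).sum := by
          omega
        rw [h3]
        exact dvd_sub hdvd hxi
      obtain ⟨hqrep, hqdeg, hqeq⟩ :=
        iso_path_eq g.toAut n C hn ho hfree q hqI w _ hqP
      have hbv := ht_lt g.toAut n C hn ho
        (((sharp Q g.toAut n C).loc (isoSet Q g.toAut n C)).t (l.head hl))
      have hbw := ht_lt g.toAut n C hn ho w
      have hww : ht g.toAut n C
          (((sharp Q g.toAut n C).loc (isoSet Q g.toAut n C)).t (l.head hl))
          = ht g.toAut n C w := by
        have hdq' : (n : ℤ) ∣ ((ht g.toAut n C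
            (((sharp Q g.toAut n C).loc (isoSet Q g.toAut n C)).t (l.head hl)) : ℤ)
            - ht g.toAut n C w) := by
          rwa [hqdeg] at hdq
        have habs : |((ht g.toAut n C
            (((sharp Q g.toAut n C).loc (isoSet Q g.toAut n C)).t (l.head hl)) : ℤ)
            - ht g.toAut n C w)| < (n : ℤ) := by
          rw [abs_lt]
          constructor <;> omega
        have h1 := Int.eq_zero_of_abs_lt_dvd hdq' habs
        omega
      have hvw : (((sharp Q g.toAut n C).loc (isoSet Q g.toAut n C)).t (l.head hl))
          = w := by
        calc @id Q.V (((sharp Q g.toAut n C).loc (isoSet Q g.toAut n C)).t (l.head hl))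
            = (⇑g.onV)^[ht g.toAut n C
                (((sharp Q g.toAut n C).loc (isoSet Q g.toAut n C)).t (l.head hl))]
              (C.repV (((sharp Q g.toAut n C).loc (isoSet Q g.toAut n C)).t
                (l.head hl))) := (ht_spec g.toAut n C hn ho _).symm
          _ = (⇑g.onV)^[ht g.toAut n C w] (C.repV w) := by rw [hqrep, hww]
          _ = w := ht_spec g.toAut n C hn ho w
      have hqvtx : locProd ℂ (sharp Q g.toAut n C) (isoSet Q g.toAut n C) q *
          locVtx ℂ (sharp Q g.toAut n C) (isoSet Q g.toAut n C) w
          = locVtx ℂ (sharp Q g.toAut n C) (isoSet Q g.toAut n C) w := by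
        rw [hqeq, hww, E_self]
        congr 1
        exact ht_spec g.toAut n C hn ho w
      refine ⟨vtx ℂ Q w * pathOf ℂ Q p, ?_⟩
      rw [map_mul, hξ.1, hlu, heq, map_mul, hξ.1, ← mul_assoc, hqvtx]
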